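/- arXiv:1812.03375 — 2 statements merged into one kernel-verified Lean document; each statement's English description precedes it below -/
import Mathlib

section
/- For the fair-coin measure λ on Cantor space, let x̄_ℓ = (1/ℓ) ∑_{k=0}^{ℓ-1} x_k denote the running frequency of 1s, and let f(x) = sup_ℓ x̄_ℓ. Then for every n ∈ ℕ there exists m ∈ ℕ such that λ{ x : sup_{ℓ < m, ℓ ≥ 1} x̄_ℓ = sup_{ℓ ≥ 1} x̄_ℓ } > 1 − 2^{-n}. -/
open MeasureTheory
open scoped ENNReal

/-- The cylinder set determined by a finite binary string. -/
def cyl (σ : List Bool) : Set (ℕ → Bool) :=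
  {x | ∀ i : Fin σ.length, x i = σ.get i}

/-- `avg x ℓ` is the frequency of `1`s among the first `ℓ` bits of `x`. -/
noncomputable def avg (x : ℕ → Bool) (ℓ : ℕ) : ℝ :=
  (∑ k ∈ Finset.range ℓ, if x k then (1:ℝ) else 0) / ℓ


lemma cyl_nil : cyl [] = Set.univ := by
  ext x; simp [cyl]

lemma measurableSet_cyl (σ : List Bool) : MeasurableSet (cyl σ) := by
  have : cyl σ = ⋂ i : Fin σ.length, {x : ℕ → Bool | x i = σ.get i} := by
    ext x; simp [cyl, Set.mem_iInter]
  rw [this]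
  exact MeasurableSet.iInter fun i =>
    (measurable_pi_apply (i : ℕ)) (MeasurableSet.singleton _)

/-- coordinate events as countable unions of cylinders -/
lemma coord_eq_iUnion (i : ℕ) (b : Bool) :
    {x : ℕ → Bool | x i = b} = ⋃ v : Fin i → Bool, cyl (List.ofFn v ++ [b]) := by
  ext x
  simp only [Set.mem_setOf_eq, Set.mem_iUnion]
  constructor
  · intro hx
    refine ⟨fun j => x j, fun j => ?_⟩
    have hlen : (List.ofFn (fun j : Fin i => x j) ++ [b]).length = i + 1 := by simp
    rcases lt_or_ge (j : ℕ) i with hj | hj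
    · have : (List.ofFn (fun j : Fin i => x j) ++ [b]).get j = x j := by
        have hji : (j : ℕ) < (List.ofFn (fun j : Fin i => x j)).length := by simpa using hj
        rw [List.get_eq_getElem, List.getElem_append_left hji]
        simp
      rw [this]
    · have hji : (j : ℕ) = i := by
        have := j.isLt; omega
      have : (List.ofFn (fun j : Fin i => x j) ++ [b]).get j = b := by
        have : (List.ofFn (fun j : Fin i => x j) ++ [b]).get j =
            (List.ofFn (fun j : Fin i => x j) ++ [b]).getD (j : ℕ) b := by
          rw [List.getD_eq_get]
        rw [this, hji]
        simp [List.getD_append_right]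
      rw [this, hji, hx]
  · rintro ⟨v, hv⟩
    have hlen : (List.ofFn v ++ [b]).length = i + 1 := by simp
    have := hv ⟨i, by omega⟩
    simpa [List.getD_eq_get, List.getD_append_right] using this

lemma generateFrom_cyl :
    (inferInstance : MeasurableSpace (ℕ → Bool)) =
      MeasurableSpace.generateFrom {s | ∃ σ : List Bool, s = cyl σ} := by
  apply le_antisymm
  · rw [show (inferInstance : MeasurableSpace (ℕ → Bool)) = MeasurableSpace.pi from rfl]
    refine iSup_le fun i => ?_
    rw [MeasurableSpace.comap_le_iff_le_map]
    intro s _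
    -- preimage of s under eval i
    have : (fun x : ℕ → Bool => x i) ⁻¹' s = ⋃ b ∈ s, {x : ℕ → Bool | x i = b} := by
      ext x; simp
    show MeasurableSet[MeasurableSpace.generateFrom _] _
    rw [this]
    refine MeasurableSet.biUnion s.to_countable fun b _ => ?_
    rw [coord_eq_iUnion i b]
    exact MeasurableSet.iUnion fun v =>
      MeasurableSpace.measurableSet_generateFrom ⟨_, rfl⟩
  · refine MeasurableSpace.generateFrom_le ?_
    rintro s ⟨σ, rfl⟩
    exact measurableSet_cyl σ

lemma isPiSystem_cyl : IsPiSystem {s : Set (ℕ → Bool) | ∃ σ : List Bool, s = cyl σ} := by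
  rintro s ⟨σ, rfl⟩ t ⟨τ, rfl⟩ hne
  obtain ⟨x, hxσ, hxτ⟩ := hne
  have key : ∀ σ τ : List Bool, σ.length ≤ τ.length →
      (∀ i : Fin σ.length, x i = σ.get i) → (∀ i : Fin τ.length, x i = τ.get i) →
      cyl σ ∩ cyl τ = cyl τ := by
    intro σ τ hlen h1 h2
    apply Set.inter_eq_self_of_subset_right
    intro y hy i
    have : σ.get i = τ.get ⟨i, lt_of_lt_of_le i.isLt hlen⟩ := by
      rw [← h1 i, h2 ⟨i, lt_of_lt_of_le i.isLt hlen⟩]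
    rw [this]
    exact hy ⟨i, lt_of_lt_of_le i.isLt hlen⟩
  rcases le_total σ.length τ.length with h | h
  · rw [key σ τ h hxσ hxτ]; exact ⟨τ, rfl⟩
  · rw [Set.inter_comm, key τ σ h hxτ hxσ]; exact ⟨σ, rfl⟩

/-- the shift map -/
def shft (x : ℕ → Bool) : ℕ → Bool := fun i => x (i + 1)

lemma measurable_shft : Measurable shft :=
  measurable_pi_lambda _ fun i => measurable_pi_apply (i + 1)

lemma shift_cyl (b : Bool) (σ : List Bool) :
    shft ⁻¹' (cyl σ) ∩ {x | x 0 = b} = cyl (b :: σ) := by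
  ext x
  simp only [Set.mem_inter_iff, Set.mem_preimage, Set.mem_setOf_eq, cyl]
  constructor
  · rintro ⟨h1, h2⟩ i
    refine Fin.cases ?_ (fun j => ?_) i
    · simpa using h2
    · simpa [shft] using h1 j
  · intro h
    constructor
    · intro j
      have := h j.succ
      simpa [shft] using this
    · simpa using h ⟨0, Nat.succ_pos _⟩

section
variable (μ : Measure (ℕ → Bool))
  (hμ : ∀ σ : List Bool, μ (cyl σ) = (2⁻¹ : ℝ≥0∞) ^ σ.length)

include hμ

lemma mu_univ : μ Set.univ = 1 := by
  have := hμ []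
  simpa [cyl_nil] using this

lemma isProb : IsProbabilityMeasure μ := ⟨mu_univ μ hμ⟩

/-- Key independence lemma. -/
lemma key_shift (b : Bool) {E : Set (ℕ → Bool)} (hE : MeasurableSet E) :
    2 * μ (shft ⁻¹' E ∩ {x | x 0 = b}) = μ E := by
  haveI := isProb μ hμ
  have hb : MeasurableSet {x : ℕ → Bool | x 0 = b} := by
    have : {x : ℕ → Bool | x 0 = b} = (fun x : ℕ → Bool => x 0) ⁻¹' {b} := by ext x; simp
    rw [this]; exact (measurable_pi_apply 0) (MeasurableSet.singleton b)
  set ν : Measure (ℕ → Bool) := 2 • ((μ.restrict {x | x 0 = b}).map shft) with hν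
  have hνE : ∀ {F : Set (ℕ → Bool)}, MeasurableSet F →
      ν F = 2 * μ (shft ⁻¹' F ∩ {x | x 0 = b}) := by
    intro F hF
    rw [hν]
    simp only [Measure.smul_apply, smul_eq_mul]
    rw [Measure.map_apply measurable_shft hF, Measure.restrict_apply (measurable_shft hF)]
    rw [two_smul, two_mul]
  have : ν = μ := by
    refine ext_of_generate_finite _ generateFrom_cyl isPiSystem_cyl ?_ ?_
    · rintro s ⟨σ, rfl⟩
      rw [hνE (measurableSet_cyl σ), shift_cyl b σ, hμ (b :: σ), hμ σ]
      rw [List.length_cons, pow_succ]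
      rw [mul_comm (2:ℝ≥0∞), mul_assoc, ENNReal.inv_mul_cancel (by norm_num) (by norm_num), mul_one]
    · rw [hνE MeasurableSet.univ, mu_univ μ hμ]
      have : shft ⁻¹' Set.univ ∩ {x : ℕ → Bool | x 0 = b} = cyl [b] := by
        ext x; simp [cyl]
      rw [this, hμ [b]]
      simp only [List.length_singleton, pow_one]
      rw [ENNReal.mul_inv_cancel (by norm_num) (by norm_num)]
  rw [← hνE hE, this]

end

/-- ±1 walk value of a finite word -/
def W {ℓ : ℕ} (v : Fin ℓ → Bool) : ℝ := ∑ i, (if v i then (1:ℝ) else -1)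

lemma card_fun_bool (n : ℕ) : (Finset.univ : Finset (Fin n → Bool)).card = 2 ^ n := by
  simp [Finset.card_univ]

lemma sum_fun_bool_succ (n : ℕ) (F : (Fin (n+1) → Bool) → ℝ) :
    ∑ v : Fin (n+1) → Bool, F v
      = ∑ b : Bool, ∑ w : Fin n → Bool, F (Fin.cons b w) := by
  rw [← (Fin.consEquiv (fun _ : Fin (n+1) => Bool)).sum_comp F, Fintype.sum_prod_type]
  rfl

lemma W_cons (n : ℕ) (b : Bool) (w : Fin n → Bool) :
    W (Fin.cons b w) = (if b then (1:ℝ) else -1) + W w := by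
  unfold W
  rw [Fin.sum_univ_succ]
  simp

lemma sumW2 (n : ℕ) : ∑ v : Fin n → Bool, (W v)^2 = n * 2^n := by
  induction n with
  | zero => simp [W]
  | succ n ih =>
    rw [sum_fun_bool_succ n (fun v => (W v)^2)]
    simp only [W_cons]
    rw [Fintype.sum_bool]
    simp only [eq_self_iff_true, Bool.false_eq_true, if_true, if_false]
    have h : (∑ w : Fin n → Bool, ((1 + W w)^2 + (-1 + W w)^2))
        = ∑ w : Fin n → Bool, ((2:ℝ) + 2 * (W w)^2) :=
      Finset.sum_congr rfl (fun w _ => by ring)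
    rw [← Finset.sum_add_distrib, h, Finset.sum_add_distrib, Finset.sum_const,
      ← Finset.mul_sum, ih, card_fun_bool, nsmul_eq_mul]
    push_cast
    ring

lemma sumW4 (n : ℕ) : ∑ v : Fin n → Bool, (W v)^4 = (3 * n^2 - 2 * n) * 2^n := by
  induction n with
  | zero => simp [W]
  | succ n ih =>
    rw [sum_fun_bool_succ n (fun v => (W v)^4)]
    simp only [W_cons]
    rw [Fintype.sum_bool]
    simp only [eq_self_iff_true, Bool.false_eq_true, if_true, if_false]
    have h : (∑ w : Fin n → Bool, ((1 + W w)^4 + (-1 + W w)^4))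
        = ∑ w : Fin n → Bool, (((2:ℝ) + 12 * (W w)^2) + 2 * (W w)^4) :=
      Finset.sum_congr rfl (fun w _ => by ring)
    rw [← Finset.sum_add_distrib, h, Finset.sum_add_distrib, Finset.sum_add_distrib,
      Finset.sum_const, ← Finset.mul_sum, ← Finset.mul_sum, ih, sumW2, card_fun_bool,
      nsmul_eq_mul]
    push_cast
    ring

lemma mem_cyl_ofFn {ℓ : ℕ} (v : Fin ℓ → Bool) (x : ℕ → Bool) :
    x ∈ cyl (List.ofFn v) ↔ ∀ i : Fin ℓ, x i = v i := by
  constructor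
  · intro h i
    have := h (Fin.cast (by simp) i)
    simpa [List.get_ofFn] using this
  · intro h i
    have := h (Fin.cast (by simp) i)
    simp [List.get_ofFn] at this ⊢; exact this

section
variable (μ : Measure (ℕ → Bool))
  (hμ : ∀ σ : List Bool, μ (cyl σ) = (2⁻¹ : ℝ≥0∞) ^ σ.length)

include hμ

/-- measure of an event depending on the first ℓ bits -/
lemma mu_fintype_event {ℓ : ℕ} (P : (Fin ℓ → Bool) → Prop) [DecidablePred P] :
    μ {x | P (fun i => x i)} =
      ((Finset.univ.filter P).card : ℝ≥0∞) * (2⁻¹ : ℝ≥0∞) ^ ℓ := by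
  have hset : {x : ℕ → Bool | P (fun i => x i)} =
      ⋃ v ∈ Finset.univ.filter P, cyl (List.ofFn v) := by
    ext x
    simp only [Set.mem_setOf_eq, Set.mem_iUnion]
    constructor
    · intro hx
      exact ⟨fun i => x i, by simpa using hx, (mem_cyl_ofFn _ x).2 fun i => rfl⟩
    · rintro ⟨v, hv, hxv⟩
      have : (fun i : Fin ℓ => x i) = v := funext fun i => (mem_cyl_ofFn v x).1 hxv i
      rw [this]
      simpa using hv
  rw [hset, measure_biUnion_finset ?_ (fun v _ => measurableSet_cyl _)]
  · rw [Finset.sum_congr rfl (fun v _ => by rw [hμ (List.ofFn v), List.length_ofFn])]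
    rw [Finset.sum_const, nsmul_eq_mul]
  · intro v hv w hw hvw
    simp only [Function.onFun]
    rw [Set.disjoint_left]
    intro x hxv hxw
    exact hvw (funext fun i => by
      rw [← (mem_cyl_ofFn v x).1 hxv i, ← (mem_cyl_ofFn w x).1 hxw i])

/-- Fourth-moment Chebyshev bound for the running average. -/
lemma mu_avg_dev (ℓ : ℕ) (hℓ : 1 ≤ ℓ) {ε : ℝ} (hε : 0 < ε) :
    μ {x | ε ≤ |avg x ℓ - 1/2|} ≤ ENNReal.ofReal (3 / (16 * ε^4 * ℓ^2)) := by
  classical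
  -- rewrite the event via W
  have havg : ∀ x : ℕ → Bool, avg x ℓ - 1/2 = W (fun i : Fin ℓ => x i) / (2*ℓ) := by
    intro x
    have hW : W (fun i : Fin ℓ => x i)
        = 2 * (∑ k ∈ Finset.range ℓ, if x k then (1:ℝ) else 0) - ℓ := by
      unfold W
      rw [Finset.sum_range fun k => if x k then (1:ℝ) else 0]
      have h4 : ∀ i : Fin ℓ, (if x i then (1:ℝ) else -1)
          = 2 * (if x i then (1:ℝ) else 0) - 1 := by
        intro i; by_cases h : x i <;> simp [h] <;> norm_num
      rw [Finset.sum_congr rfl fun i _ => h4 i, Finset.sum_sub_distrib, ← Finset.mul_sum]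
      simp
    have hℓR : (0:ℝ) < ℓ := by exact_mod_cast hℓ
    rw [hW]
    unfold avg
    field_simp
  have hev : {x : ℕ → Bool | ε ≤ |avg x ℓ - 1/2|}
      = {x | (fun v : Fin ℓ → Bool => 2*ε*ℓ ≤ |W v|) (fun i => x i)} := by
    ext x
    have hℓR : (0:ℝ) < ℓ := by exact_mod_cast hℓ
    simp only [Set.mem_setOf_eq, havg x, abs_div]
    rw [abs_of_pos (by positivity : (0:ℝ) < 2*(ℓ:ℝ)), le_div_iff₀ (by positivity)]
    constructor <;> intro h <;> nlinarith
  rw [hev]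
  have hmue := mu_fintype_event μ hμ (fun v : Fin ℓ → Bool => 2*ε*ℓ ≤ |W v|)
  rw [hmue]
  -- counting bound
  set P : (Fin ℓ → Bool) → Prop := fun v => 2*ε*ℓ ≤ |W v| with hP
  set c : ℕ := (Finset.univ.filter P).card with hc
  have hℓR : (1:ℝ) ≤ ℓ := by exact_mod_cast hℓ
  have h2pos : (0:ℝ) < 2^ℓ := by positivity
  have hcount : (c : ℝ) * (2*ε*ℓ)^4 ≤ 3 * ℓ^2 * 2^ℓ := by
    have h1 : (c : ℝ) * (2*ε*ℓ)^4 ≤ ∑ v ∈ Finset.univ.filter P, (W v)^4 := by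
      rw [← nsmul_eq_mul, ← Finset.sum_const]
      apply Finset.sum_le_sum
      intro v hv
      have hv' : 2*ε*ℓ ≤ |W v| := by simpa [hP] using (Finset.mem_filter.1 hv).2
      calc (2*ε*ℓ)^4 ≤ |W v|^4 := by
            apply pow_le_pow_left₀ (by positivity) hv'
        _ = (W v)^4 := by rw [← abs_pow, abs_of_nonneg (by positivity)]
    have h2 : ∑ v ∈ Finset.univ.filter P, (W v)^4 ≤ ∑ v : Fin ℓ → Bool, (W v)^4 := by
      apply Finset.sum_le_sum_of_subset_of_nonneg (Finset.filter_subset _ _)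
      intro v _ _; positivity
    have h3 := sumW4 ℓ
    nlinarith [h1, h2, h3, h2pos]
  have hcard : (c : ℝ) ≤ 3 / (16 * ε^4 * ℓ^2) * 2^ℓ := by
    have hpos : (0:ℝ) < (2*ε*ℓ)^4 := by positivity
    have h5 : (c:ℝ) ≤ 3 * ℓ^2 * 2^ℓ / (2*ε*ℓ)^4 := (le_div_iff₀ hpos).2 hcount
    have heq : 3 * (ℓ:ℝ)^2 * 2^ℓ / (2*ε*ℓ)^4 = 3 / (16 * ε^4 * ℓ^2) * 2^ℓ := by
      have hℓ0 : (ℓ:ℝ) ≠ 0 := by linarith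
      have hε0 : ε ≠ 0 := ne_of_gt hε
      field_simp
      ring
    rw [heq] at h5
    exact h5
  calc ((c : ℕ) : ℝ≥0∞) * (2⁻¹ : ℝ≥0∞) ^ ℓ
      = ENNReal.ofReal ((c : ℝ) * (2⁻¹:ℝ)^ℓ) := by
        rw [ENNReal.ofReal_mul (by positivity), ENNReal.ofReal_natCast,
          ENNReal.ofReal_pow (by norm_num)]
        congr 1
        rw [ENNReal.ofReal_inv_of_pos (by norm_num)]
        norm_num
    _ ≤ ENNReal.ofReal (3 / (16 * ε^4 * ℓ^2)) := by
        apply ENNReal.ofReal_le_ofReal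
        rw [inv_pow]
        calc (c:ℝ) * ((2:ℝ)^ℓ)⁻¹
            ≤ (3 / (16 * ε^4 * ℓ^2) * 2^ℓ) * ((2:ℝ)^ℓ)⁻¹ :=
              mul_le_mul_of_nonneg_right hcard (by positivity)
          _ = 3 / (16 * ε^4 * ℓ^2) := by field_simp

end

section
variable (μ : Measure (ℕ → Bool))
  (hμ : ∀ σ : List Bool, μ (cyl σ) = (2⁻¹ : ℝ≥0∞) ^ σ.length)

include hμ

lemma ae_tendsto_avg :
    ∀ᵐ x ∂μ, Filter.Tendsto (fun ℓ => avg x ℓ) Filter.atTop (nhds (1/2)) := by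
  have key : ∀ j : ℕ, ∀ᵐ x ∂μ, ∀ᶠ ℓ : ℕ in Filter.atTop,
      ¬ (1/((j:ℝ)+1) ≤ |avg x (ℓ+1) - 1/2|) := by
    intro j
    set ε : ℝ := 1/((j:ℝ)+1) with hε
    have hεpos : 0 < ε := by positivity
    set s : ℕ → Set (ℕ → Bool) := fun ℓ => {x | ε ≤ |avg x (ℓ+1) - 1/2|} with hs
    have hsum : ∑' ℓ : ℕ, μ (s ℓ) ≠ ⊤ := by
      have hbound : ∀ ℓ : ℕ, μ (s ℓ) ≤
          ENNReal.ofReal (3 / (16 * ε^4 * ((ℓ:ℝ)+1)^2)) := by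
        intro ℓ
        have := mu_avg_dev μ hμ (ℓ+1) (Nat.le_add_left 1 ℓ) hεpos
        simpa [hs] using this
      have hsummable : Summable (fun ℓ : ℕ => 3 / (16 * ε^4 * ((ℓ:ℝ)+1)^2)) := by
        have h1 : Summable (fun ℓ : ℕ => 1/((ℓ:ℝ)+1)^2) := by
          exact_mod_cast (summable_nat_add_iff 1).2
            (Real.summable_one_div_nat_pow.2 (by norm_num))
        have : (fun ℓ : ℕ => 3 / (16 * ε^4 * ((ℓ:ℝ)+1)^2))
            = fun ℓ : ℕ => (3 / (16 * ε^4)) * (1/((ℓ:ℝ)+1)^2) := by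
          funext ℓ
          field_simp
        rw [this]
        exact h1.mul_left _
      have hle : ∑' ℓ : ℕ, μ (s ℓ)
          ≤ ENNReal.ofReal (∑' ℓ : ℕ, 3 / (16 * ε^4 * ((ℓ:ℝ)+1)^2)) := by
        rw [ENNReal.ofReal_tsum_of_nonneg (fun ℓ => by positivity) hsummable]
        exact ENNReal.tsum_le_tsum hbound
      exact (lt_of_le_of_lt hle ENNReal.ofReal_lt_top).ne
    have := MeasureTheory.ae_eventually_notMem hsum
    filter_upwards [this] with x hx
    simpa [hs] using hx
  rw [← MeasureTheory.ae_all_iff] at key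
  filter_upwards [key] with x hx
  rw [Metric.tendsto_atTop]
  intro ε hεpos
  obtain ⟨j, hj⟩ := exists_nat_one_div_lt hεpos
  obtain ⟨N, hN⟩ := (Filter.eventually_atTop.1 (hx j))
  refine ⟨N+1, fun ℓ hℓ => ?_⟩
  obtain ⟨ℓ', rfl⟩ : ∃ ℓ', ℓ = ℓ' + 1 := ⟨ℓ - 1, by omega⟩
  have := hN ℓ' (by omega)
  rw [Real.dist_eq]
  push_neg at this
  calc |avg x (ℓ'+1) - 1/2| < 1/((j:ℝ)+1) := this
    _ < ε := hj

end

def ones (x : ℕ → Bool) (ℓ : ℕ) : ℕ := ∑ k ∈ Finset.range ℓ, if x k then 1 else 0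

def Bset (c : ℕ) : Set (ℕ → Bool) := {x | ∀ ℓ, 1 ≤ ℓ → 2 * ones x ℓ < ℓ + c}

lemma measurable_ones (ℓ : ℕ) : Measurable (fun x => ones x ℓ) := by
  unfold ones
  apply Finset.measurable_sum
  intro k _
  have hms : MeasurableSet {a : ℕ → Bool | a k = true} := by
    have : {a : ℕ → Bool | a k = true} = (fun a : ℕ → Bool => a k) ⁻¹' {true} := by
      ext a; simp
    rw [this]; exact (measurable_pi_apply k) (MeasurableSet.singleton true)
  exact Measurable.ite hms measurable_const measurable_const

lemma measurableSet_Bset (c : ℕ) : MeasurableSet (Bset c) := by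
  have : Bset c = ⋂ ℓ : ℕ, {x | 1 ≤ ℓ → 2 * ones x ℓ < ℓ + c} := by
    ext x; simp [Bset, Set.mem_iInter]
  rw [this]
  refine MeasurableSet.iInter fun ℓ => ?_
  by_cases h : 1 ≤ ℓ
  · have : {x : ℕ → Bool | 1 ≤ ℓ → 2 * ones x ℓ < ℓ + c}
        = (fun x => ones x ℓ) ⁻¹' {t | 2 * t < ℓ + c} := by
      ext x; simp [h]
    rw [this]
    exact (measurable_ones ℓ) (by trivial)
  · have : {x : ℕ → Bool | 1 ≤ ℓ → 2 * ones x ℓ < ℓ + c} = Set.univ := by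
      ext x; simp [h]
    rw [this]; exact MeasurableSet.univ

lemma ones_succ (x : ℕ → Bool) (ℓ : ℕ) :
    ones x (ℓ+1) = ones (shft x) ℓ + (if x 0 then 1 else 0) := by
  unfold ones
  rw [Finset.sum_range_succ']
  rfl

lemma Bset_inter_false (c : ℕ) :
    Bset c ∩ {x | x 0 = false} = shft ⁻¹' Bset (c+1) ∩ {x | x 0 = false} := by
  ext x
  simp only [Set.mem_inter_iff, Set.mem_setOf_eq, Set.mem_preimage]
  constructor
  · rintro ⟨hB, h0⟩
    refine ⟨fun ℓ hℓ => ?_, h0⟩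
    have := hB (ℓ+1) (by omega)
    rw [ones_succ, h0] at this
    simp only [Bool.false_eq_true, if_false] at this
    omega
  · rintro ⟨hB, h0⟩
    refine ⟨fun ℓ hℓ => ?_, h0⟩
    obtain ⟨ℓ', rfl⟩ : ∃ ℓ', ℓ = ℓ' + 1 := ⟨ℓ - 1, by omega⟩
    rw [ones_succ, h0]
    simp only [Bool.false_eq_true, if_false]
    rcases Nat.eq_zero_or_pos ℓ' with h | h
    · subst h
      have : ones (shft x) 0 = 0 := by simp [ones]
      omega
    · have := hB ℓ' h
      omega

lemma Bset_inter_true (c : ℕ) :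
    Bset (c+2) ∩ {x | x 0 = true} = shft ⁻¹' Bset (c+1) ∩ {x | x 0 = true} := by
  ext x
  simp only [Set.mem_inter_iff, Set.mem_setOf_eq, Set.mem_preimage]
  constructor
  · rintro ⟨hB, h0⟩
    refine ⟨fun ℓ hℓ => ?_, h0⟩
    have := hB (ℓ+1) (by omega)
    rw [ones_succ, h0] at this
    simp only [if_true] at this
    omega
  · rintro ⟨hB, h0⟩
    refine ⟨fun ℓ hℓ => ?_, h0⟩
    obtain ⟨ℓ', rfl⟩ : ∃ ℓ', ℓ = ℓ' + 1 := ⟨ℓ - 1, by omega⟩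
    rw [ones_succ, h0]
    simp only [if_true]
    rcases Nat.eq_zero_or_pos ℓ' with h | h
    · subst h
      have : ones (shft x) 0 = 0 := by simp [ones]
      omega
    · have := hB ℓ' h
      omega

lemma Bset_inter_true_small {c : ℕ} (hc : c ≤ 1) :
    Bset c ∩ {x | x 0 = true} = ∅ := by
  ext x
  simp only [Set.mem_inter_iff, Set.mem_setOf_eq, Set.mem_empty_iff_false, iff_false]
  rintro ⟨hB, h0⟩
  have := hB 1 le_rfl
  have h1 : ones x 1 = 1 := by
    unfold ones
    rw [Finset.sum_range_one, h0]
    simp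
  omega

section
variable (μ : Measure (ℕ → Bool))
  (hμ : ∀ σ : List Bool, μ (cyl σ) = (2⁻¹ : ℝ≥0∞) ^ σ.length)

include hμ

lemma mu_Bset_split (c : ℕ) :
    μ (Bset c) = μ (Bset c ∩ {x | x 0 = false}) + μ (Bset c ∩ {x | x 0 = true}) := by
  have hf : MeasurableSet {x : ℕ → Bool | x 0 = true} := by
    have : {x : ℕ → Bool | x 0 = true} = (fun x : ℕ → Bool => x 0) ⁻¹' {true} := by
      ext x; simp
    rw [this]; exact (measurable_pi_apply 0) (MeasurableSet.singleton true)
  have hdiff : Bset c \ {x | x 0 = true} = Bset c ∩ {x | x 0 = false} := by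
    ext x
    simp only [Set.mem_inter_iff, Set.mem_diff, Set.mem_setOf_eq]
    constructor
    · rintro ⟨h1, h2⟩; exact ⟨h1, by simpa using h2⟩
    · rintro ⟨h1, h2⟩; exact ⟨h1, by simp [h2]⟩
  rw [add_comm, ← measure_inter_add_diff (Bset c) hf, hdiff]

lemma mu_Bset_false (c : ℕ) :
    2 * μ (Bset c ∩ {x | x 0 = false}) = μ (Bset (c+1)) := by
  rw [Bset_inter_false]
  exact key_shift μ hμ false (measurableSet_Bset (c+1))

lemma mu_Bset_true (c : ℕ) :
    2 * μ (Bset (c+2) ∩ {x | x 0 = true}) = μ (Bset (c+1)) := by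
  rw [Bset_inter_true]
  exact key_shift μ hμ true (measurableSet_Bset (c+1))

lemma mu_Bset_zero : μ (Bset 0) = 0 := by
  haveI := isProb μ hμ
  set q : ℕ → ℝ≥0∞ := fun c => μ (Bset c) with hq
  have hfin : ∀ c, q c ≠ ⊤ := fun c => (measure_lt_top μ _).ne
  set r : ℕ → ℝ := fun c => (q c).toReal with hr
  have hrle : ∀ c, r c ≤ 1 := by
    intro c
    have : q c ≤ 1 := prob_le_one
    simpa [hr] using ENNReal.toReal_le_of_le_ofReal zero_le_one (by simpa using this)
  have hrnn : ∀ c, 0 ≤ r c := fun c => ENNReal.toReal_nonneg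
  -- recursions
  have h01 : ∀ c, c ≤ 1 → 2 * r c = r (c+1) := by
    intro c hc
    have hsplit := mu_Bset_split μ hμ c
    rw [Bset_inter_true_small hc] at hsplit
    simp only [measure_empty, add_zero] at hsplit
    have := mu_Bset_false μ hμ c
    rw [← hsplit] at this
    have := congrArg ENNReal.toReal this
    rw [ENNReal.toReal_mul] at this
    simpa [hr, hq] using this
  have h2 : ∀ c, 2 * r (c+2) = r (c+3) + r (c+1) := by
    intro c
    have hsplit := mu_Bset_split μ hμ (c+2)
    have hf := mu_Bset_false μ hμ (c+2)
    have ht := mu_Bset_true μ hμ c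
    have key : 2 * q (c+2) = q (c+3) + q (c+1) := by
      rw [hq]
      calc 2 * μ (Bset (c+2))
          = 2 * μ (Bset (c+2) ∩ {x | x 0 = false})
            + 2 * μ (Bset (c+2) ∩ {x | x 0 = true}) := by rw [hsplit]; ring
        _ = μ (Bset (c+2+1)) + μ (Bset (c+1)) := by rw [hf, ht]
    have := congrArg ENNReal.toReal key
    rw [ENNReal.toReal_mul, ENNReal.toReal_add (hfin _) (hfin _)] at this
    simpa [hr, hq] using this
  -- linear growth
  have hlin : ∀ c, r (c+1) = (c+1) * r 1 ∧ r (c+2) = (c+2) * r 1 := by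
    intro c
    induction c with
    | zero =>
      constructor
      · simp
      · have := h01 1 le_rfl
        push_cast
        linarith
    | succ c ih =>
      obtain ⟨ih1, ih2⟩ := ih
      constructor
      · push_cast at ih2 ⊢; linarith
      · have := h2 c
        push_cast at ih1 ih2 ⊢
        linarith
  have hr1 : r 1 = 0 := by
    by_contra h
    have hpos : 0 < r 1 := lt_of_le_of_ne (hrnn 1) (Ne.symm h)
    obtain ⟨c, hc⟩ := exists_nat_gt (1 / r 1)
    have h1 := (hlin c).1
    have hle := hrle (c+1)
    rw [h1] at hle
    have : (1:ℝ)/ r 1 < c + 1 := by push_cast at hc ⊢; linarith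
    rw [div_lt_iff₀ hpos] at this
    linarith
  have hr0 : r 0 = 0 := by
    have := h01 0 (by omega)
    rw [hr1] at this
    linarith
  have : q 0 = 0 := by
    rcases ENNReal.toReal_eq_zero_iff (q 0) |>.1 hr0 with h | h
    · exact h
    · exact absurd h (hfin 0)
  exact this

end

lemma measurable_avg (ℓ : ℕ) : Measurable (fun x => avg x ℓ) := by
  unfold avg
  apply Measurable.div_const
  apply Finset.measurable_sum
  intro k _
  have hms : MeasurableSet {a : ℕ → Bool | a k = true} := by
    have : {a : ℕ → Bool | a k = true} = (fun a : ℕ → Bool => a k) ⁻¹' {true} := by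
      ext a; simp
    rw [this]; exact (measurable_pi_apply k) (MeasurableSet.singleton true)
  exact Measurable.ite hms measurable_const measurable_const

def Eset (m : ℕ) : Set (ℕ → Bool) :=
  {x | ∃ ℓ', 1 ≤ ℓ' ∧ ℓ' < m ∧ ∀ ℓ, 1 ≤ ℓ → avg x ℓ ≤ avg x ℓ'}

def Emax : Set (ℕ → Bool) :=
  {x | ∃ ℓ', 1 ≤ ℓ' ∧ ∀ ℓ, 1 ≤ ℓ → avg x ℓ ≤ avg x ℓ'}

lemma measurableSet_aux (ℓ' : ℕ) :
    MeasurableSet {x : ℕ → Bool | ∀ ℓ, 1 ≤ ℓ → avg x ℓ ≤ avg x ℓ'} := by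
  have : {x : ℕ → Bool | ∀ ℓ, 1 ≤ ℓ → avg x ℓ ≤ avg x ℓ'}
      = ⋂ ℓ : ℕ, {x | 1 ≤ ℓ → avg x ℓ ≤ avg x ℓ'} := by
    ext x; simp
  rw [this]
  refine MeasurableSet.iInter fun ℓ => ?_
  by_cases h : 1 ≤ ℓ
  · have : {x : ℕ → Bool | 1 ≤ ℓ → avg x ℓ ≤ avg x ℓ'}
        = {x | avg x ℓ ≤ avg x ℓ'} := by ext x; simp [h]
    rw [this]
    exact measurableSet_le (measurable_avg ℓ) (measurable_avg ℓ')
  · have : {x : ℕ → Bool | 1 ≤ ℓ → avg x ℓ ≤ avg x ℓ'} = Set.univ := by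
      ext x; simp [h]
    rw [this]; exact MeasurableSet.univ

lemma measurableSet_Eset (m : ℕ) : MeasurableSet (Eset m) := by
  have : Eset m = ⋃ ℓ' : ℕ, ⋃ (_ : 1 ≤ ℓ' ∧ ℓ' < m),
      {x : ℕ → Bool | ∀ ℓ, 1 ≤ ℓ → avg x ℓ ≤ avg x ℓ'} := by
    ext x; simp [Eset]; tauto
  rw [this]
  exact MeasurableSet.iUnion fun ℓ' =>
    MeasurableSet.iUnion fun _ => measurableSet_aux ℓ'

lemma measurableSet_Emax : MeasurableSet Emax := by
  have : Emax = ⋃ ℓ' : ℕ, ⋃ (_ : 1 ≤ ℓ'),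
      {x : ℕ → Bool | ∀ ℓ, 1 ≤ ℓ → avg x ℓ ≤ avg x ℓ'} := by
    ext x; simp [Emax]
  rw [this]
  exact MeasurableSet.iUnion fun ℓ' =>
    MeasurableSet.iUnion fun _ => measurableSet_aux ℓ'

lemma monotone_Eset : Monotone Eset := by
  intro a b hab x hx
  obtain ⟨ℓ', h1, h2, h3⟩ := hx
  exact ⟨ℓ', h1, lt_of_lt_of_le h2 hab, h3⟩

lemma iUnion_Eset : ⋃ m, Eset m = Emax := by
  ext x
  simp only [Set.mem_iUnion, Eset, Emax, Set.mem_setOf_eq]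
  constructor
  · rintro ⟨m, ℓ', h1, _, h3⟩; exact ⟨ℓ', h1, h3⟩
  · rintro ⟨ℓ', h1, h3⟩; exact ⟨ℓ' + 1, ℓ', h1, by omega, h3⟩

lemma avg_eq_ones (x : ℕ → Bool) (ℓ : ℕ) : avg x ℓ = (ones x ℓ : ℝ) / ℓ := by
  unfold avg ones
  congr 1
  rw [Nat.cast_sum]
  apply Finset.sum_congr rfl
  intro k _
  by_cases h : x k <;> simp [h]

lemma not_mem_Bset_zero_iff (x : ℕ → Bool) :
    x ∉ Bset 0 ↔ ∃ ℓ₀, 1 ≤ ℓ₀ ∧ 1/2 ≤ avg x ℓ₀ := by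
  unfold Bset
  simp only [Set.mem_setOf_eq, not_forall]
  constructor
  · rintro ⟨ℓ₀, h1, h2⟩
    refine ⟨ℓ₀, h1, ?_⟩
    rw [avg_eq_ones]
    rw [le_div_iff₀ (by exact_mod_cast h1 : (0:ℝ) < ℓ₀)]
    have : ℓ₀ ≤ 2 * ones x ℓ₀ := by omega
    calc 1/2 * (ℓ₀:ℝ) = ℓ₀ / 2 := by ring
      _ ≤ (2 * ones x ℓ₀ : ℕ) / 2 := by
          apply div_le_div_of_nonneg_right ?_ (by norm_num)
          exact_mod_cast this
      _ = (ones x ℓ₀ : ℝ) := by push_cast; ring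
  · rintro ⟨ℓ₀, h1, h2⟩
    refine ⟨ℓ₀, h1, ?_⟩
    rw [avg_eq_ones, le_div_iff₀ (by exact_mod_cast h1 : (0:ℝ) < ℓ₀)] at h2
    intro hlt
    have : (2 * ones x ℓ₀ : ℝ) < ℓ₀ := by exact_mod_cast by omega
    push_cast at this
    linarith

lemma argmax_of_tendsto (x : ℕ → Bool)
    (hT : Filter.Tendsto (fun ℓ => avg x ℓ) Filter.atTop (nhds (1/2)))
    (hB : ∃ ℓ₀, 1 ≤ ℓ₀ ∧ 1/2 ≤ avg x ℓ₀) : x ∈ Emax := by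
  obtain ⟨ℓ₀, hℓ₀, havgℓ₀⟩ := hB
  by_cases hgt : ∃ ℓ₁, 1 ≤ ℓ₁ ∧ 1/2 < avg x ℓ₁
  · obtain ⟨ℓ₁, hℓ₁, havgℓ₁⟩ := hgt
    have hε : 0 < avg x ℓ₁ - 1/2 := by linarith
    rw [Metric.tendsto_atTop] at hT
    obtain ⟨N, hN⟩ := hT _ hε
    have hNlt : ∀ ℓ ≥ N, avg x ℓ < avg x ℓ₁ := by
      intro ℓ hℓ
      have := hN ℓ hℓ
      rw [Real.dist_eq] at this
      have := abs_lt.1 this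
      linarith [this.2]
    have hmem₁ : ℓ₁ ∈ Finset.Icc 1 (N + ℓ₁) := by
      rw [Finset.mem_Icc]; omega
    obtain ⟨ℓ', hℓ'mem, hℓ'max⟩ :=
      Finset.exists_max_image (Finset.Icc 1 (N + ℓ₁)) (fun ℓ => avg x ℓ) ⟨ℓ₁, hmem₁⟩
    rw [Finset.mem_Icc] at hℓ'mem
    refine ⟨ℓ', hℓ'mem.1, fun ℓ hℓ => ?_⟩
    by_cases hcase : ℓ ≤ N + ℓ₁
    · exact hℓ'max ℓ (Finset.mem_Icc.2 ⟨hℓ, hcase⟩)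
    · have h1 : avg x ℓ < avg x ℓ₁ := hNlt ℓ (by omega)
      have h2 : avg x ℓ₁ ≤ avg x ℓ' := hℓ'max ℓ₁ hmem₁
      linarith
  · push_neg at hgt
    refine ⟨ℓ₀, hℓ₀, fun ℓ hℓ => ?_⟩
    calc avg x ℓ ≤ 1/2 := hgt ℓ hℓ
      _ ≤ avg x ℓ₀ := havgℓ₀

section
variable (μ : Measure (ℕ → Bool))
  (hμ : ∀ σ : List Bool, μ (cyl σ) = (2⁻¹ : ℝ≥0∞) ^ σ.length)

include hμ

lemma mu_Emax : μ Emax = 1 := by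
  haveI := isProb μ hμ
  have h1 := ae_tendsto_avg μ hμ
  have h2 : ∀ᵐ x ∂μ, x ∉ Bset 0 :=
    (MeasureTheory.ae_iff).2 (by simpa using mu_Bset_zero μ hμ)
  have h3 : ∀ᵐ x ∂μ, x ∈ Emax := by
    filter_upwards [h1, h2] with x hx1 hx2
    exact argmax_of_tendsto x hx1 ((not_mem_Bset_zero_iff x).1 hx2)
  have h4 : μ Emaxᶜ = 0 := by
    have := MeasureTheory.ae_iff.1 h3
    exact this
  exact (MeasureTheory.prob_compl_eq_zero_iff measurableSet_Emax).1 h4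
end

lemma Eset_subset_G (m : ℕ) :
    Eset m ⊆ {x | sSup {r : ℝ | ∃ ℓ, 1 ≤ ℓ ∧ ℓ < m ∧ r = avg x ℓ}
              = sSup {r : ℝ | ∃ ℓ, 1 ≤ ℓ ∧ r = avg x ℓ}} := by
  intro x hx
  obtain ⟨ℓ', h1, h2, h3⟩ := hx
  set A : Set ℝ := {r | ∃ ℓ, 1 ≤ ℓ ∧ ℓ < m ∧ r = avg x ℓ} with hA
  set Af : Set ℝ := {r | ∃ ℓ, 1 ≤ ℓ ∧ r = avg x ℓ} with hAf
  have hmemA : avg x ℓ' ∈ A := ⟨ℓ', h1, h2, rfl⟩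
  have hmemAf : avg x ℓ' ∈ Af := ⟨ℓ', h1, rfl⟩
  have hub : ∀ r ∈ Af, r ≤ avg x ℓ' := by
    rintro r ⟨ℓ, hℓ, rfl⟩
    exact h3 ℓ hℓ
  have hbddAf : BddAbove Af := ⟨avg x ℓ', hub⟩
  have hbddA : BddAbove A := ⟨avg x ℓ', fun r hr => hub r (by
    obtain ⟨ℓ, ha, _, hb⟩ := hr; exact ⟨ℓ, ha, hb⟩)⟩
  have hAAf : A ⊆ Af := by rintro r ⟨ℓ, ha, _, hb⟩; exact ⟨ℓ, ha, hb⟩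
  show sSup A = sSup Af
  have e1 : sSup Af ≤ avg x ℓ' := csSup_le ⟨_, hmemAf⟩ hub
  have e2 : avg x ℓ' ≤ sSup A := le_csSup hbddA hmemA
  have e3 : sSup A ≤ sSup Af := csSup_le_csSup hbddAf ⟨_, hmemA⟩ hAAf
  linarith

/-- For each `n` there is an `m` such that, with probability greater than
`1 - 2⁻ⁿ`, the supremum of the running frequencies of `1`s is attained
already among `1 ≤ ℓ < m`. -/
theorem sup_running_frequency_attained_with_high_probability
    (μ : Measure (ℕ → Bool))
    (hμ : ∀ σ : List Bool, μ (cyl σ) = (2⁻¹ : ℝ≥0∞) ^ σ.length) (n : ℕ) :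
    ∃ m : ℕ,
      1 - (2⁻¹ : ℝ≥0∞) ^ n <
        μ {x | sSup {r : ℝ | ∃ ℓ, 1 ≤ ℓ ∧ ℓ < m ∧ r = avg x ℓ}
              = sSup {r : ℝ | ∃ ℓ, 1 ≤ ℓ ∧ r = avg x ℓ}} := by
  have htend := MeasureTheory.tendsto_measure_iUnion_atTop (μ := μ) monotone_Eset
  rw [iUnion_Eset, mu_Emax μ hμ] at htend
  have hlt : 1 - (2⁻¹ : ℝ≥0∞) ^ n < 1 := by
    apply ENNReal.sub_lt_self ENNReal.one_ne_top one_ne_zero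
    exact pow_ne_zero n (ENNReal.inv_ne_zero.2 (by norm_num))
  obtain ⟨m, hm⟩ := (htend.eventually (eventually_gt_nhds hlt)).exists
  exact ⟨m, lt_of_lt_of_le hm (measure_mono (Eset_subset_G m))⟩
end

section
/- There exists a universal Martin-Löf test: a Martin-Löf test (U_n) such that every Martin-Löf null subset of Cantor space is contained in ⋂_n U_n. Consequently, the set of computable points of Cantor space is a Martin-Löf null set. -/
open MeasureTheory
open scoped ENNReal

lemma mem_cyl {σ : List Bool} {x : ℕ → Bool} :
    x ∈ cyl σ ↔ ∀ i : ℕ, (h : i < σ.length) → x i = σ[i] := by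
  constructor
  · intro hx i h; exact hx ⟨i, h⟩
  · intro hx i; exact hx i i.2

lemma mem_cyl_append {σ : List Bool} {b : Bool} {x : ℕ → Bool} :
    x ∈ cyl (σ ++ [b]) ↔ x ∈ cyl σ ∧ x σ.length = b := by
  simp only [mem_cyl]
  constructor
  · intro h
    refine ⟨fun i hi => ?_, ?_⟩
    · have hi' : i < (σ ++ [b]).length := by simp; omega
      have := h i hi'
      rwa [List.getElem_append_left hi] at this
    · have hi' : σ.length < (σ ++ [b]).length := by simp
      have := h σ.length hi'
      simpa using this
  · rintro ⟨h1, h2⟩ i hi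
    simp only [List.length_append, List.length_cons, List.length_nil] at hi
    rcases Nat.lt_or_ge i σ.length with h | h
    · rw [List.getElem_append_left h]; exact h1 i h
    · have : i = σ.length := by omega
      subst this
      rw [List.getElem_append_right (le_refl _)]
      simpa using h2

lemma cyl_append_subset (σ τ : List Bool) : cyl (σ ++ τ) ⊆ cyl σ := by
  intro x hx
  rw [mem_cyl] at hx ⊢
  intro i hi
  have h : i < (σ ++ τ).length := by simp; omega
  have := hx i h
  rwa [List.getElem_append_left hi] at this

lemma cyl_prefix_subset {σ τ : List Bool} (h : σ <+: τ) : cyl τ ⊆ cyl σ := by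
  obtain ⟨ρ, rfl⟩ := h; exact cyl_append_subset σ ρ

lemma cyl_split (σ : List Bool) :
    cyl σ = cyl (σ ++ [false]) ∪ cyl (σ ++ [true]) := by
  ext x
  simp only [Set.mem_union, mem_cyl_append]
  constructor
  · intro hx
    rcases Bool.eq_false_or_eq_true (x σ.length) with hb | hb
    · exact Or.inr ⟨hx, hb⟩
    · exact Or.inl ⟨hx, hb⟩
  · rintro (⟨h, _⟩ | ⟨h, _⟩) <;> exact h

lemma cyl_disjoint {σ τ : List Bool} (hlen : σ.length = τ.length) (hne : σ ≠ τ) :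
    Disjoint (cyl σ) (cyl τ) := by
  rw [Set.disjoint_left]
  intro x hxσ hxτ
  apply hne
  apply List.ext_get hlen
  intro i h1 h2
  simp only [List.get_eq_getElem]
  rw [← (mem_cyl.1 hxσ) i h1, ← (mem_cyl.1 hxτ) i h2]

/-- All binary strings of length `n`. -/
def allStr : ℕ → List (List Bool) :=
  Nat.rec [[]] (fun _ ih => ih.flatMap fun s => [s ++ [false], s ++ [true]])

@[simp] lemma allStr_zero : allStr 0 = [[]] := rfl
@[simp] lemma allStr_succ (n : ℕ) :
    allStr (n + 1) = (allStr n).flatMap fun s => [s ++ [false], s ++ [true]] := rfl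

lemma length_of_mem_allStr : ∀ {n : ℕ} {τ : List Bool}, τ ∈ allStr n → τ.length = n := by
  intro n
  induction n with
  | zero => intro τ h; simp at h; simp [h]
  | succ n ih =>
    intro τ h
    simp only [allStr_succ, List.mem_flatMap] at h
    obtain ⟨s, hs, h⟩ := h
    simp only [List.mem_cons, List.mem_singleton] at h
    rcases h with rfl | h
    · simp [ih hs]
    · simp at h; subst h; simp [ih hs]

lemma mem_allStr : ∀ {n : ℕ} {τ : List Bool}, τ.length = n → τ ∈ allStr n := by
  intro n
  induction n with
  | zero => intro τ h; simp [List.length_eq_zero_iff.1 h]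
  | succ n ih =>
    intro τ h
    have hne : τ ≠ [] := by intro hh; simp [hh] at h
    have hd : τ = τ.dropLast ++ [τ.getLast hne] := (List.dropLast_append_getLast hne).symm
    have hlen : τ.dropLast.length = n := by
      rw [List.length_dropLast, h]; rfl
    simp only [allStr_succ, List.mem_flatMap]
    refine ⟨τ.dropLast, ih hlen, ?_⟩
    rcases Bool.eq_false_or_eq_true (τ.getLast hne) with hb | hb
    · simp only [List.mem_cons, List.mem_singleton]
      right; left
      conv_lhs => rw [hd]
      rw [hb]
    · simp only [List.mem_cons, List.mem_singleton]
      left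
      conv_lhs => rw [hd]
      rw [hb]

lemma nodup_allStr : ∀ n : ℕ, (allStr n).Nodup := by
  intro n
  induction n with
  | zero => simp
  | succ n ih =>
    rw [allStr_succ, List.nodup_flatMap]
    constructor
    · intro s _
      simp
    · have hp : (allStr n).Pairwise (· ≠ ·) := ih
      refine hp.imp ?_
      intro s s' hne
      intro l hl hl'
      simp only [List.mem_cons, List.mem_singleton, List.not_mem_nil, or_false] at hl hl'
      apply hne
      rcases hl with rfl | rfl <;> rcases hl' with h | h
      · exact List.append_left_injective _ h
      · exact absurd (List.append_inj' h rfl).2 (by simp)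
      · exact absurd (List.append_inj' h rfl).2 (by simp)
      · exact List.append_left_injective _ h

/-- Boolean prefix test. -/
def pre (σ τ : List Bool) : Bool :=
  (List.range σ.length).all fun i => decide (σ[i]? = τ[i]?)

lemma pre_iff {σ τ : List Bool} : pre σ τ = true ↔ σ <+: τ := by
  simp only [pre, List.all_eq_true, decide_eq_true_iff]
  constructor
  · intro h
    have hlen : σ.length ≤ τ.length := by
      by_contra hc
      push_neg at hc
      have h1 := h τ.length (List.mem_range.2 hc)
      rw [List.getElem?_eq_none (le_refl _), List.getElem?_eq_getElem hc] at h1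
      simp at h1
    have : σ = τ.take σ.length := by
      apply List.ext_getElem
      · simp [hlen]
      · intro i h1 h2
        have := h i (List.mem_range.2 h1)
        rw [List.getElem?_eq_getElem h1,
          List.getElem?_eq_getElem (lt_of_lt_of_le h1 hlen)] at this
        simp only [Option.some.injEq] at this
        rw [List.getElem_take]
        exact this
    rw [this]
    exact List.take_prefix _ _
  · rintro ⟨ρ, rfl⟩ i hi
    rw [List.mem_range] at hi
    rw [List.getElem?_append_left hi]

/-- The length-`N` refinements of members of `L`. -/
def sel (L : List (List Bool)) (N : ℕ) : List (List Bool) :=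
  (allStr N).filter fun τ => L.any fun σ => pre σ τ

def cnt (L : List (List Bool)) (N : ℕ) : ℕ := (sel L N).length

lemma cyl_eq_biUnion_allStr (σ : List Bool) :
    ∀ d : ℕ, cyl σ = ⋃ τ ∈ allStr d, cyl (σ ++ τ) := by
  intro d
  induction d with
  | zero => simp
  | succ d ih =>
    rw [ih]
    ext x
    simp only [Set.mem_iUnion, allStr_succ, List.mem_flatMap, exists_prop]
    constructor
    · rintro ⟨τ, hτ, hx⟩
      rw [cyl_split (σ ++ τ)] at hx
      rcases hx with hx | hx
      · exact ⟨τ ++ [false], ⟨τ, hτ, by simp⟩, by rwa [← List.append_assoc]⟩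
      · exact ⟨τ ++ [true], ⟨τ, hτ, by simp⟩, by rwa [← List.append_assoc]⟩
    · rintro ⟨τ', ⟨s, hs, hmem⟩, hx⟩
      simp only [List.mem_cons, List.mem_singleton] at hmem
      refine ⟨s, hs, ?_⟩
      rw [cyl_split (σ ++ s)]
      rcases hmem with rfl | hmem
      · left; rwa [List.append_assoc]
      · simp at hmem; subst hmem; right; rwa [List.append_assoc]

lemma biUnion_sel {L : List (List Bool)} {N : ℕ} (hL : ∀ σ ∈ L, σ.length ≤ N) :
    ⋃ σ ∈ L, cyl σ = ⋃ τ ∈ sel L N, cyl τ := by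
  ext x
  simp only [Set.mem_iUnion, exists_prop]
  constructor
  · rintro ⟨σ, hσ, hx⟩
    rw [cyl_eq_biUnion_allStr σ (N - σ.length)] at hx
    simp only [Set.mem_iUnion, exists_prop] at hx
    obtain ⟨ρ, hρ, hx⟩ := hx
    refine ⟨σ ++ ρ, ?_, hx⟩
    rw [sel, List.mem_filter]
    constructor
    · apply mem_allStr
      rw [List.length_append, length_of_mem_allStr hρ]
      exact Nat.add_sub_cancel' (hL σ hσ)
    · rw [List.any_eq_true]
      exact ⟨σ, hσ, pre_iff.2 ⟨ρ, rfl⟩⟩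
  · rintro ⟨τ, hτ, hx⟩
    rw [sel, List.mem_filter, List.any_eq_true] at hτ
    obtain ⟨_, σ, hσ, hpre⟩ := hτ
    exact ⟨σ, hσ, cyl_prefix_subset (pre_iff.1 hpre) hx⟩

lemma measure_biUnion_cyl_eq (μ : Measure (ℕ → Bool))
    (hμ : ∀ σ : List Bool, μ (cyl σ) = (2⁻¹ : ℝ≥0∞) ^ σ.length)
    {L : List (List Bool)} {N : ℕ} (hL : ∀ σ ∈ L, σ.length ≤ N) :
    μ (⋃ σ ∈ L, cyl σ) = (cnt L N : ℝ≥0∞) * (2⁻¹ : ℝ≥0∞) ^ N := by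
  rw [biUnion_sel hL]
  have hnodup : (sel L N).Nodup := (nodup_allStr N).filter _
  have hseteq : ⋃ τ ∈ sel L N, cyl τ = ⋃ τ ∈ (sel L N).toFinset, cyl τ := by
    simp [List.mem_toFinset]
  rw [hseteq]
  rw [measure_biUnion_finset ?hd (fun τ _ => measurableSet_cyl τ)]
  case hd =>
    intro τ hτ τ' hτ' hne
    simp only [Finset.mem_coe, List.mem_toFinset] at hτ hτ'
    have h1 : τ.length = N := length_of_mem_allStr (List.mem_filter.1 hτ).1
    have h2 : τ'.length = N := length_of_mem_allStr (List.mem_filter.1 hτ').1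
    exact cyl_disjoint (h1.trans h2.symm) hne
  have : ∀ τ ∈ (sel L N).toFinset, μ (cyl τ) = (2⁻¹ : ℝ≥0∞) ^ N := by
    intro τ hτ
    rw [List.mem_toFinset] at hτ
    rw [hμ, length_of_mem_allStr (List.mem_filter.1 hτ).1]
  rw [Finset.sum_congr rfl this, Finset.sum_const, List.toFinset_card_of_nodup hnodup]
  simp [cnt, nsmul_eq_mul]

open Nat.Partrec

/-- The effectively open set generated by an enumeration of (codes of) cylinders. -/
def openOf (f : ℕ → Option (List Bool)) : Set (ℕ → Bool) :=
  ⋃ k, (f k).elim ∅ cyl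

lemma tsum_geom_shift (n : ℕ) :
    (∑' e : ℕ, (2⁻¹ : ℝ≥0∞) ^ (n + e + 1)) = (2⁻¹ : ℝ≥0∞) ^ n := by
  have h1 : ∀ e : ℕ, (2⁻¹ : ℝ≥0∞) ^ (n + e + 1) = (2⁻¹ : ℝ≥0∞) ^ (n + 1) * (2⁻¹) ^ e := by
    intro e
    rw [← pow_add]
    ring_nf
  rw [tsum_congr h1, ENNReal.tsum_mul_left, ENNReal.tsum_geometric,
    ENNReal.one_sub_inv_two, pow_succ, mul_assoc,
    ENNReal.mul_inv_cancel (by norm_num) (by norm_num), mul_one]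

lemma openOf_pair_eq (F : ℕ → ℕ → Option (List Bool)) :
    openOf (fun k => F (Nat.unpair k).1 (Nat.unpair k).2) =
      ⋃ e : ℕ, ⋃ j : ℕ, (F e j).elim ∅ cyl := by
  ext x
  simp only [openOf, Set.mem_iUnion]
  constructor
  · rintro ⟨k, hk⟩
    exact ⟨(Nat.unpair k).1, (Nat.unpair k).2, hk⟩
  · rintro ⟨e, j, h⟩
    refine ⟨Nat.pair e j, ?_⟩
    rwa [Nat.unpair_pair]

lemma measure_openOf_pair_le (μ : Measure (ℕ → Bool)) (F : ℕ → ℕ → Option (List Bool)) (n : ℕ)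
    (h : ∀ e : ℕ, μ (⋃ j : ℕ, (F e j).elim ∅ cyl) ≤ (2⁻¹ : ℝ≥0∞) ^ (n + e + 1)) :
    μ (openOf (fun k => F (Nat.unpair k).1 (Nat.unpair k).2)) ≤ (2⁻¹ : ℝ≥0∞) ^ n := by
  rw [openOf_pair_eq]
  calc μ (⋃ e : ℕ, ⋃ j : ℕ, (F e j).elim ∅ cyl)
      ≤ ∑' e : ℕ, μ (⋃ j : ℕ, (F e j).elim ∅ cyl) := measure_iUnion_le _
    _ ≤ ∑' e : ℕ, (2⁻¹ : ℝ≥0∞) ^ (n + e + 1) := ENNReal.tsum_le_tsum h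
    _ = (2⁻¹ : ℝ≥0∞) ^ n := tsum_geom_shift n

/-! ### The test covering the computable points -/

def tryStrAux (c : Code) (s : ℕ) : ℕ → Option (List Bool) :=
  Nat.rec (some []) fun i ih =>
    ih.bind fun l => (Code.evaln s c i).bind fun v =>
      (Encodable.decode (α := Bool) v).map fun b => l ++ [b]

def compTest (n k : ℕ) : Option (List Bool) :=
  tryStrAux (Denumerable.ofNat Code (Nat.unpair k).1) (Nat.unpair k).2
    (n + (Nat.unpair k).1 + 1)

@[simp] lemma tryStrAux_zero {c : Code} {s : ℕ} : tryStrAux c s 0 = some [] := rfl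

lemma tryStrAux_succ {c : Code} {s m : ℕ} :
    tryStrAux c s (m + 1) = (tryStrAux c s m).bind fun l =>
      (Code.evaln s c m).bind fun v =>
        (Encodable.decode (α := Bool) v).map fun b => l ++ [b] := rfl

lemma tryStrAux_length {c : Code} {s m : ℕ} {σ : List Bool}
    (h : tryStrAux c s m = some σ) : σ.length = m := by
  induction m generalizing σ with
  | zero => simp at h; simp [← h]
  | succ m ih =>
    rw [tryStrAux_succ, Option.bind_eq_some_iff] at h
    obtain ⟨l, hl, h⟩ := h
    rw [Option.bind_eq_some_iff] at h
    obtain ⟨v, hv, h⟩ := h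
    rw [Option.map_eq_some_iff] at h
    obtain ⟨b, hb, rfl⟩ := h
    simp [ih hl]

lemma tryStrAux_mono {c : Code} {s s' m : ℕ} {σ : List Bool} (hss : s ≤ s')
    (h : tryStrAux c s m = some σ) : tryStrAux c s' m = some σ := by
  induction m generalizing σ with
  | zero => simpa using h
  | succ m ih =>
    rw [tryStrAux_succ, Option.bind_eq_some_iff] at h
    obtain ⟨l, hl, h⟩ := h
    rw [Option.bind_eq_some_iff] at h
    obtain ⟨v, hv, h⟩ := h
    rw [tryStrAux_succ, ih hl]
    have : Code.evaln s' c m = some v := Code.evaln_mono hss hv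
    rw [Option.bind_some, this, Option.bind_some]
    exact h

lemma tryStrAux_det {c : Code} {s s' m : ℕ} {σ σ' : List Bool}
    (h : tryStrAux c s m = some σ) (h' : tryStrAux c s' m = some σ') : σ = σ' := by
  rcases le_total s s' with hss | hss
  · rw [tryStrAux_mono hss h] at h'; exact Option.some_inj.1 h'
  · rw [tryStrAux_mono hss h'] at h; exact (Option.some_inj.1 h).symm

lemma measure_compTest_le (μ : Measure (ℕ → Bool))
    (hμ : ∀ σ : List Bool, μ (cyl σ) = (2⁻¹ : ℝ≥0∞) ^ σ.length) (n : ℕ) :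
    μ (openOf (compTest n)) ≤ (2⁻¹ : ℝ≥0∞) ^ n := by
  have : compTest n = fun k =>
      (fun e j => tryStrAux (Denumerable.ofNat Code e) j (n + e + 1))
        (Nat.unpair k).1 (Nat.unpair k).2 := rfl
  rw [this]
  refine measure_openOf_pair_le μ
    (fun e j => tryStrAux (Denumerable.ofNat Code e) j (n + e + 1)) n ?_
  intro e
  set c := Denumerable.ofNat Code e
  by_cases hex : ∃ j σ, tryStrAux c j (n + e + 1) = some σ
  · obtain ⟨j₀, σ₀, hj₀⟩ := hex
    have hsub : (⋃ j : ℕ, (tryStrAux c j (n + e + 1)).elim ∅ cyl) ⊆ cyl σ₀ := by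
      apply Set.iUnion_subset
      intro j
      cases hj : tryStrAux c j (n + e + 1) with
      | none => simp
      | some σ =>
        simp only [Option.elim_some]
        rw [tryStrAux_det hj hj₀]
    calc μ _ ≤ μ (cyl σ₀) := measure_mono hsub
      _ = (2⁻¹ : ℝ≥0∞) ^ σ₀.length := hμ σ₀
      _ = (2⁻¹ : ℝ≥0∞) ^ (n + e + 1) := by rw [tryStrAux_length hj₀]
  · push_neg at hex
    have : (⋃ j : ℕ, (tryStrAux c j (n + e + 1)).elim ∅ cyl) = ∅ := by
      apply Set.iUnion_eq_empty.2
      intro j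
      cases hj : tryStrAux c j (n + e + 1) with
      | none => simp
      | some σ => exact absurd hj (hex j σ)
    rw [this, measure_empty]
    exact zero_le

lemma tryStrAux_of_eval {c : Code} {x : ℕ → Bool}
    (hc : ∀ i, c.eval i = Part.some (Encodable.encode (x i))) (m : ℕ) :
    ∃ s, tryStrAux c s m = some ((List.range m).map x) := by
  induction m with
  | zero => exact ⟨0, rfl⟩
  | succ m ih =>
    obtain ⟨s₀, hs₀⟩ := ih
    have : Encodable.encode (x m) ∈ c.eval m := by rw [hc m]; exact Part.mem_some _
    obtain ⟨s₁, hs₁⟩ := Code.evaln_complete.1 this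
    refine ⟨max s₀ s₁, ?_⟩
    rw [tryStrAux_succ, tryStrAux_mono (le_max_left s₀ s₁) hs₀, Option.bind_some]
    have h1 : Code.evaln (max s₀ s₁) c m = some (Encodable.encode (x m)) :=
      Code.evaln_mono (le_max_right s₀ s₁) hs₁
    rw [h1, Option.bind_some, Encodable.encodek]
    simp [List.range_succ]

lemma mem_cyl_range_map (x : ℕ → Bool) (m : ℕ) : x ∈ cyl ((List.range m).map x) := by
  rw [mem_cyl]
  intro i hi
  simp only [List.length_map, List.length_range] at hi
  simp [hi]

lemma computable_mem_compTest {x : ℕ → Bool} (hx : Computable x) (n : ℕ) :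
    x ∈ openOf (compTest n) := by
  have h1 : Computable fun i => Encodable.encode (x i) := Computable.encode.comp hx
  have h2 : Nat.Partrec ((fun i => Encodable.encode (x i)) : ℕ →. ℕ) :=
    Partrec.nat_iff.1 h1
  obtain ⟨c, hc⟩ := Code.exists_code.1 h2
  have hc' : ∀ i, c.eval i = Part.some (Encodable.encode (x i)) := by
    intro i; rw [hc]; rfl
  set e := Encodable.encode c
  obtain ⟨s, hs⟩ := tryStrAux_of_eval hc' (n + e + 1)
  rw [openOf, Set.mem_iUnion]
  refine ⟨Nat.pair e s, ?_⟩
  have : compTest n (Nat.pair e s) = some ((List.range (n + e + 1)).map x) := by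
    rw [compTest, Nat.unpair_pair]
    simpa [e, Denumerable.ofNat_encode] using hs
  rw [this, Option.elim_some]
  exact mem_cyl_range_map x (n + e + 1)

/-! ### The universal test -/

lemma ennreal_cnt_le {a m N : ℕ} :
    (a : ℝ≥0∞) * (2⁻¹) ^ N ≤ (2⁻¹) ^ m ↔ a * 2 ^ m ≤ 2 ^ N := by
  rw [← ENNReal.inv_pow, ← ENNReal.inv_pow,
    ENNReal.mul_inv_le_iff (by positivity) (by simp),
    mul_comm ((2 : ℝ≥0∞) ^ m)⁻¹, ← div_eq_mul_inv,
    ENNReal.le_div_iff_mul_le (Or.inl (by positivity)) (Or.inl (by simp)),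
    show ((2:ℝ≥0∞) ^ m) = ((2^m : ℕ) : ℝ≥0∞) by push_cast; ring,
    show ((2:ℝ≥0∞) ^ N) = ((2^N : ℕ) : ℝ≥0∞) by push_cast; ring,
    ← Nat.cast_mul, Nat.cast_le]

def maxLen (L : List (List Bool)) : ℕ := L.foldr (fun σ r => max σ.length r) 0

lemma length_le_maxLen {L : List (List Bool)} {σ : List Bool} (h : σ ∈ L) :
    σ.length ≤ maxLen L := by
  induction L with
  | nil => simp at h
  | cons τ L ih =>
    rcases List.mem_cons.1 h with rfl | h
    · exact le_max_left _ _
    · exact le_trans (ih h) (le_max_right _ _)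

/-- Decide whether adding `σ` to the already accepted list `L` keeps the measure `≤ 2⁻ᵐ`. -/
def okB (σ : List Bool) (L : List (List Bool)) (m : ℕ) : Bool :=
  decide (cnt (σ :: L) (max (maxLen (σ :: L)) m) * 2 ^ m ≤ 2 ^ (max (maxLen (σ :: L)) m))

lemma okB_iff (μ : Measure (ℕ → Bool))
    (hμ : ∀ σ : List Bool, μ (cyl σ) = (2⁻¹ : ℝ≥0∞) ^ σ.length)
    (σ : List Bool) (L : List (List Bool)) (m : ℕ) :
    okB σ L m = true ↔ μ (⋃ τ ∈ σ :: L, cyl τ) ≤ (2⁻¹ : ℝ≥0∞) ^ m := by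
  set N := max (maxLen (σ :: L)) m with hN
  have hlen : ∀ τ ∈ σ :: L, τ.length ≤ N :=
    fun τ hτ => le_trans (length_le_maxLen hτ) (le_max_left _ _)
  rw [okB, decide_eq_true_iff, measure_biUnion_cyl_eq μ hμ hlen, ennreal_cnt_le]

/-- The `k`-th candidate cylinder enumerated by code `c` at level `m`. -/
def cand (c : Code) (m k : ℕ) : Option (List Bool) :=
  ((Code.evaln (Nat.unpair k).2 c (Nat.pair m (Nat.unpair k).1)).bind
    fun v => Encodable.decode (α := Option (List Bool)) v).bind id

/-- The list of accepted cylinders among the first `k` candidates. -/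
def accL (c : Code) (m : ℕ) : ℕ → List (List Bool) :=
  Nat.rec [] fun k ih =>
    (cand c m k).elim ih fun σ => bif okB σ ih m then σ :: ih else ih

@[simp] lemma accL_zero {c : Code} {m : ℕ} : accL c m 0 = [] := rfl

lemma accL_succ {c : Code} {m k : ℕ} :
    accL c m (k + 1) =
      (cand c m k).elim (accL c m k)
        fun σ => bif okB σ (accL c m k) m then σ :: accL c m k else accL c m k := rfl

def outU (c : Code) (m k : ℕ) : Option (List Bool) :=
  (cand c m k).bind fun σ => bif okB σ (accL c m k) m then some σ else none

def univTest (n k : ℕ) : Option (List Bool) :=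
  outU (Denumerable.ofNat Code (Nat.unpair k).1) (n + (Nat.unpair k).1 + 1) (Nat.unpair k).2

lemma measure_accL_le (μ : Measure (ℕ → Bool))
    (hμ : ∀ σ : List Bool, μ (cyl σ) = (2⁻¹ : ℝ≥0∞) ^ σ.length)
    (c : Code) (m : ℕ) : ∀ k, μ (⋃ τ ∈ accL c m k, cyl τ) ≤ (2⁻¹ : ℝ≥0∞) ^ m := by
  intro k
  induction k with
  | zero => simp
  | succ k ih =>
    rw [accL_succ]
    cases hc : cand c m k with
    | none => simpa using ih
    | some σ =>
      simp only [Option.elim_some]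
      cases hok : okB σ (accL c m k) m with
      | false => simpa using ih
      | true =>
        simp only [cond_true]
        exact (okB_iff μ hμ σ (accL c m k) m).1 hok

lemma outU_mem_accL {c : Code} {m k : ℕ} {σ : List Bool} (h : outU c m k = some σ) :
    σ ∈ accL c m (k + 1) := by
  rw [outU, Option.bind_eq_some_iff] at h
  obtain ⟨τ, hτ, h⟩ := h
  cases hok : okB τ (accL c m k) m with
  | false => rw [hok] at h; simp at h
  | true =>
    rw [hok, cond_true, Option.some_inj] at h
    subst h
    rw [accL_succ, hτ, Option.elim_some, hok, cond_true]
    exact List.mem_cons_self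

lemma accL_subset_succ {c : Code} {m k : ℕ} : accL c m k ⊆ accL c m (k + 1) := by
  rw [accL_succ]
  cases cand c m k with
  | none => simp
  | some σ =>
    simp only [Option.elim_some]
    cases okB σ (accL c m k) m with
    | false => simp
    | true => simp only [cond_true]; exact List.subset_cons_self _ _

lemma accL_mono {c : Code} {m : ℕ} {k k' : ℕ} (h : k ≤ k') : accL c m k ⊆ accL c m k' := by
  induction k', (h : k ≤ k') using Nat.le_induction with
  | base => exact fun _ h => h
  | succ k' _ ih => exact fun τ hτ => accL_subset_succ (ih hτ)

lemma measure_outU_le (μ : Measure (ℕ → Bool))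
    (hμ : ∀ σ : List Bool, μ (cyl σ) = (2⁻¹ : ℝ≥0∞) ^ σ.length)
    (c : Code) (m : ℕ) :
    μ (⋃ k : ℕ, (outU c m k).elim ∅ cyl) ≤ (2⁻¹ : ℝ≥0∞) ^ m := by
  have hsub : (⋃ k : ℕ, (outU c m k).elim ∅ cyl) ⊆ ⋃ k : ℕ, ⋃ τ ∈ accL c m k, cyl τ := by
    apply Set.iUnion_subset
    intro k
    cases h : outU c m k with
    | none => simp
    | some σ =>
      simp only [Option.elim_some]
      intro x hx
      rw [Set.mem_iUnion]
      exact ⟨k + 1, Set.mem_biUnion (outU_mem_accL h) hx⟩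
  refine le_trans (measure_mono hsub) ?_
  have hdir : Directed (· ⊆ ·) fun k : ℕ => ⋃ τ ∈ accL c m k, cyl τ := by
    intro k k'
    refine ⟨max k k', ?_, ?_⟩ <;>
      exact Set.biUnion_subset_biUnion_left fun τ hτ => accL_mono (by omega) hτ
  rw [hdir.measure_iUnion]
  exact iSup_le fun k => measure_accL_le μ hμ c m k

lemma measure_univTest_le (μ : Measure (ℕ → Bool))
    (hμ : ∀ σ : List Bool, μ (cyl σ) = (2⁻¹ : ℝ≥0∞) ^ σ.length) (n : ℕ) :
    μ (openOf (univTest n)) ≤ (2⁻¹ : ℝ≥0∞) ^ n := by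
  have : univTest n = fun k =>
      (fun e j => outU (Denumerable.ofNat Code e) (n + e + 1) j)
        (Nat.unpair k).1 (Nat.unpair k).2 := rfl
  rw [this]
  refine measure_openOf_pair_le μ
    (fun e j => outU (Denumerable.ofNat Code e) (n + e + 1) j) n ?_
  intro e
  exact measure_outU_le μ hμ _ _

section Universality

variable {g : ℕ → ℕ → Option (List Bool)} {c : Code}
variable (hc : ∀ k : ℕ, c.eval k =
  Part.some (Encodable.encode (g (Nat.unpair k).1 (Nat.unpair k).2)))

include hc

lemma cand_sound {m k : ℕ} {σ : List Bool} (h : cand c m k = some σ) :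
    ∃ j, g m j = some σ := by
  rw [cand, Option.bind_eq_some_iff] at h
  obtain ⟨o, ho, hid⟩ := h
  rw [Option.bind_eq_some_iff] at ho
  obtain ⟨v, hv, hdec⟩ := ho
  have hvv : v ∈ c.eval (Nat.pair m (Nat.unpair k).1) := Code.evaln_sound hv
  rw [hc, Nat.unpair_pair] at hvv
  simp only [Part.mem_some_iff] at hvv
  subst hvv
  rw [Encodable.encodek] at hdec
  rw [Option.some_inj] at hdec
  subst hdec
  exact ⟨(Nat.unpair k).1, hid⟩

lemma cand_complete {m j : ℕ} {σ : List Bool} (h : g m j = some σ) :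
    ∃ k, cand c m k = some σ := by
  have : Encodable.encode (g m j) ∈ c.eval (Nat.pair m j) := by
    rw [hc, Nat.unpair_pair]; exact Part.mem_some _
  obtain ⟨s, hs⟩ := Code.evaln_complete.1 this
  refine ⟨Nat.pair j s, ?_⟩
  rw [cand, Nat.unpair_pair]
  simp only [Option.mem_def] at hs
  rw [hs, Option.bind_some, Encodable.encodek, Option.bind_some, h]
  rfl

lemma accL_sound {m : ℕ} : ∀ k, ∀ τ ∈ accL c m k, ∃ j, g m j = some τ := by
  intro k
  induction k with
  | zero => simp
  | succ k ih =>
    rw [accL_succ]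
    cases hcd : cand c m k with
    | none => simpa using ih
    | some σ =>
      simp only [Option.elim_some]
      cases okB σ (accL c m k) m with
      | false => simpa using ih
      | true =>
        simp only [cond_true]
        intro τ hτ
        rcases List.mem_cons.1 hτ with rfl | hτ
        · exact cand_sound hc hcd
        · exact ih τ hτ

lemma cyl_subset_openOf {m j : ℕ} {σ : List Bool} (h : g m j = some σ) :
    cyl σ ⊆ openOf (g m) := by
  intro x hx
  rw [openOf, Set.mem_iUnion]
  exact ⟨j, by rw [h]; exact hx⟩

lemma okB_always (μ : Measure (ℕ → Bool))
    (hμ : ∀ σ : List Bool, μ (cyl σ) = (2⁻¹ : ℝ≥0∞) ^ σ.length)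
    {m : ℕ} (hbound : μ (openOf (g m)) ≤ (2⁻¹ : ℝ≥0∞) ^ m)
    {k : ℕ} {σ : List Bool} (h : cand c m k = some σ) :
    okB σ (accL c m k) m = true := by
  rw [okB_iff μ hμ]
  refine le_trans (measure_mono ?_) hbound
  apply Set.iUnion₂_subset
  intro τ hτ
  rcases List.mem_cons.1 hτ with rfl | hτ
  · obtain ⟨j, hj⟩ := cand_sound hc h
    exact cyl_subset_openOf hc hj
  · obtain ⟨j, hj⟩ := accL_sound hc k τ hτ
    exact cyl_subset_openOf hc hj

lemma mem_outU_of_mem (μ : Measure (ℕ → Bool))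
    (hμ : ∀ σ : List Bool, μ (cyl σ) = (2⁻¹ : ℝ≥0∞) ^ σ.length)
    {m : ℕ} (hbound : μ (openOf (g m)) ≤ (2⁻¹ : ℝ≥0∞) ^ m)
    {x : ℕ → Bool} (hx : x ∈ openOf (g m)) :
    ∃ k σ, outU c m k = some σ ∧ x ∈ cyl σ := by
  rw [openOf, Set.mem_iUnion] at hx
  obtain ⟨j, hj⟩ := hx
  cases hgj : g m j with
  | none => rw [hgj] at hj; simp at hj
  | some σ =>
    rw [hgj, Option.elim_some] at hj
    obtain ⟨k, hk⟩ := cand_complete hc hgj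
    refine ⟨k, σ, ?_, hj⟩
    rw [outU, hk, Option.bind_some, okB_always hc μ hμ hbound hk, cond_true]

end Universality

lemma univTest_universal (μ : Measure (ℕ → Bool))
    (hμ : ∀ σ : List Bool, μ (cyl σ) = (2⁻¹ : ℝ≥0∞) ^ σ.length)
    {g : ℕ → ℕ → Option (List Bool)} (hg : Computable₂ g)
    (hb : ∀ m, μ (openOf (g m)) ≤ (2⁻¹ : ℝ≥0∞) ^ m)
    {x : ℕ → Bool} (hx : x ∈ ⋂ m, openOf (g m)) (n : ℕ) :
    x ∈ openOf (univTest n) := by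
  have h1 : Computable fun k : ℕ => g (Nat.unpair k).1 (Nat.unpair k).2 :=
    hg.comp ((Primrec.fst.comp Primrec.unpair).to_comp)
      ((Primrec.snd.comp Primrec.unpair).to_comp)
  have h2 : Computable fun k : ℕ =>
      Encodable.encode (g (Nat.unpair k).1 (Nat.unpair k).2) :=
    Computable.encode.comp h1
  have h3 : Nat.Partrec
      ((fun k : ℕ => Encodable.encode (g (Nat.unpair k).1 (Nat.unpair k).2)) : ℕ →. ℕ) :=
    Partrec.nat_iff.1 h2
  obtain ⟨c, hcod⟩ := Code.exists_code.1 h3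
  have hc : ∀ k : ℕ, c.eval k =
      Part.some (Encodable.encode (g (Nat.unpair k).1 (Nat.unpair k).2)) := by
    intro k; rw [hcod]; rfl
  set e := Encodable.encode c with he
  set m := n + e + 1 with hm
  have hxm : x ∈ openOf (g m) := Set.mem_iInter.1 hx m
  obtain ⟨k, σ, hout, hcylσ⟩ := mem_outU_of_mem hc μ hμ (hb m) hxm
  rw [openOf, Set.mem_iUnion]
  refine ⟨Nat.pair e k, ?_⟩
  have : univTest n (Nat.pair e k) = some σ := by
    rw [univTest, Nat.unpair_pair]
    simpa [he, Denumerable.ofNat_encode, ← hm] using hout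
  rw [this, Option.elim_some]
  exact hcylσ

/-! ### Computability of the tests -/

section PrimrecLemmas

open Primrec

variable {α β : Type*} [Primcodable α] [Primcodable β]

lemma primrec_list_filter {f : α → List β} {p : α → β → Bool}
    (hf : Primrec f) (hp : Primrec₂ p) :
    Primrec fun a => (f a).filter (p a) := by
  have h : Primrec fun a => (f a).foldr (fun b s => bif p a b then b :: s else s) [] := by
    refine Primrec.list_foldr (h := fun a bs => bif p a bs.1 then bs.1 :: bs.2 else bs.2)
      hf (Primrec.const ([] : List β)) ?_
    exact Primrec₂.mk <| Primrec.cond (hp.comp Primrec.fst (Primrec.fst.comp Primrec.snd))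
      (Primrec.list_cons.comp (Primrec.fst.comp Primrec.snd) (Primrec.snd.comp Primrec.snd))
      (Primrec.snd.comp Primrec.snd)
  refine h.of_eq fun a => ?_
  induction f a with
  | nil => rfl
  | cons b l ih => rw [List.foldr_cons, ih, List.filter_cons, cond_eq_if]

lemma primrec_list_any {f : α → List β} {p : α → β → Bool}
    (hf : Primrec f) (hp : Primrec₂ p) :
    Primrec fun a => (f a).any (p a) := by
  have h : Primrec fun a => (f a).foldr (fun b s => p a b || s) false := by
    refine Primrec.list_foldr (h := fun a bs => p a bs.1 || bs.2)
      hf (Primrec.const false) ?_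
    exact Primrec₂.mk <| (Primrec.dom_bool₂ (· || ·)).comp
      (hp.comp Primrec.fst (Primrec.fst.comp Primrec.snd))
      (Primrec.snd.comp Primrec.snd)
  refine h.of_eq fun a => ?_
  induction f a with
  | nil => rfl
  | cons b l ih => simp [ih]

lemma primrec_list_all {f : α → List β} {p : α → β → Bool}
    (hf : Primrec f) (hp : Primrec₂ p) :
    Primrec fun a => (f a).all (p a) := by
  have h : Primrec fun a => (f a).foldr (fun b s => p a b && s) true := by
    refine Primrec.list_foldr (h := fun a bs => p a bs.1 && bs.2)
      hf (Primrec.const true) ?_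
    exact Primrec₂.mk <| (Primrec.dom_bool₂ (· && ·)).comp
      (hp.comp Primrec.fst (Primrec.fst.comp Primrec.snd))
      (Primrec.snd.comp Primrec.snd)
  refine h.of_eq fun a => ?_
  induction f a with
  | nil => rfl
  | cons b l ih => simp [ih]

end PrimrecLemmas

lemma primrec_pre : Primrec₂ pre := by
  have : Primrec fun p : List Bool × List Bool =>
      (List.range p.1.length).all fun i => decide (p.1[i]? = p.2[i]?) := by
    refine primrec_list_all (p := fun (p : List Bool × List Bool) (i : ℕ) =>
      decide (p.1[i]? = p.2[i]?))
      (Primrec.list_range.comp (Primrec.list_length.comp Primrec.fst)) ?_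
    exact Primrec₂.mk <| PrimrecPred.decide <| (Primrec.eq (α := Option Bool)).comp
      (Primrec.list_getElem?.comp (Primrec.fst.comp Primrec.fst) Primrec.snd)
      (Primrec.list_getElem?.comp (Primrec.snd.comp Primrec.fst) Primrec.snd)
  exact Primrec₂.mk this

lemma primrec_allStr : Primrec allStr := by
  apply Primrec.nat_rec₁ ([[]] : List (List Bool))
  apply Primrec₂.mk
  refine Primrec.list_flatMap (g := fun (_ : ℕ × List (List Bool)) (s : List Bool) =>
    [s ++ [false], s ++ [true]]) Primrec.snd ?_
  have h1 : Primrec fun p : (ℕ × List (List Bool)) × List Bool => p.2 ++ [false] :=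
    Primrec.list_append.comp Primrec.snd (Primrec.const [false])
  have h2 : Primrec fun p : (ℕ × List (List Bool)) × List Bool => p.2 ++ [true] :=
    Primrec.list_append.comp Primrec.snd (Primrec.const [true])
  exact Primrec.list_cons.comp h1 (Primrec.list_cons.comp h2 (Primrec.const []))

lemma primrec_sel : Primrec₂ sel := by
  have : Primrec fun p : List (List Bool) × ℕ =>
      (allStr p.2).filter fun τ => p.1.any fun σ => pre σ τ := by
    refine primrec_list_filter (p := fun (p : List (List Bool) × ℕ) τ =>
      p.1.any fun σ => pre σ τ) (primrec_allStr.comp Primrec.snd) ?_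
    apply Primrec₂.mk
    refine primrec_list_any (p := fun (q : (List (List Bool) × ℕ) × List Bool) σ =>
      pre σ q.2) (Primrec.fst.comp Primrec.fst) ?_
    exact primrec_pre.comp Primrec.snd (Primrec.snd.comp Primrec.fst)
  exact Primrec₂.mk this

lemma primrec_cnt : Primrec₂ cnt :=
  Primrec₂.mk (Primrec.list_length.comp (primrec_sel.comp Primrec.fst Primrec.snd))

lemma primrec_maxLen : Primrec maxLen := by
  have h : Primrec fun L : List (List Bool) =>
      L.foldr (fun σ r => max σ.length r) 0 := by
    refine Primrec.list_foldr (h := fun (_ : List (List Bool)) (p : List Bool × ℕ) =>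
      max p.1.length p.2) Primrec.id (Primrec.const 0) ?_
    exact Primrec₂.mk (Primrec.nat_max.comp
      (Primrec.list_length.comp (Primrec.fst.comp Primrec.snd))
      (Primrec.snd.comp Primrec.snd))
  exact h

lemma primrec_pow : Primrec₂ ((· ^ ·) : ℕ → ℕ → ℕ) :=
  Primrec₂.unpaired'.1 Nat.Primrec.pow

set_option maxHeartbeats 2000000 in
lemma primrec_okB : Primrec fun t : List Bool × List (List Bool) × ℕ =>
    okB t.1 t.2.1 t.2.2 := by
  have hq : Primrec fun t : List Bool × List (List Bool) × ℕ => t.1 :: t.2.1 :=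
    Primrec.list_cons.comp Primrec.fst (Primrec.fst.comp Primrec.snd)
  have hm : Primrec fun t : List Bool × List (List Bool) × ℕ => t.2.2 :=
    Primrec.snd.comp Primrec.snd
  have hN : Primrec fun t : List Bool × List (List Bool) × ℕ =>
      max (maxLen (t.1 :: t.2.1)) t.2.2 :=
    Primrec.nat_max.comp (primrec_maxLen.comp hq) hm
  have hlhs : Primrec fun t : List Bool × List (List Bool) × ℕ =>
      cnt (t.1 :: t.2.1) (max (maxLen (t.1 :: t.2.1)) t.2.2) * 2 ^ t.2.2 :=
    Primrec.nat_mul.comp (primrec_cnt.comp hq hN)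
      (primrec_pow.comp (Primrec.const 2) hm)
  have hrhs : Primrec fun t : List Bool × List (List Bool) × ℕ =>
      2 ^ max (maxLen (t.1 :: t.2.1)) t.2.2 :=
    primrec_pow.comp (Primrec.const 2) hN
  exact (Primrec.nat_le.comp hlhs hrhs).decide

set_option maxHeartbeats 2000000 in
lemma primrec_cand : Primrec fun t : (Code × ℕ) × ℕ => cand t.1.1 t.1.2 t.2 := by
  unfold cand
  have h_ev : Primrec fun t : (Code × ℕ) × ℕ =>
      Code.evaln (Nat.unpair t.2).2 t.1.1 (Nat.pair t.1.2 (Nat.unpair t.2).1) := by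
    refine Code.primrec_evaln.comp (Primrec.pair (Primrec.pair ?_ ?_) ?_)
    · exact Primrec.snd.comp (Primrec.unpair.comp Primrec.snd)
    · exact Primrec.fst.comp Primrec.fst
    · exact Primrec₂.natPair.comp (Primrec.snd.comp Primrec.fst)
        (Primrec.fst.comp (Primrec.unpair.comp Primrec.snd))
  have h_b1 : Primrec fun t : (Code × ℕ) × ℕ =>
      (Code.evaln (Nat.unpair t.2).2 t.1.1 (Nat.pair t.1.2 (Nat.unpair t.2).1)).bind
        fun v => Encodable.decode (α := Option (List Bool)) v :=
    Primrec.option_bind h_ev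
      (Primrec₂.mk ((Primrec.decode (α := Option (List Bool))).comp Primrec.snd))
  exact Primrec.option_bind h_b1 (Primrec₂.mk Primrec.snd)

set_option maxHeartbeats 2000000 in
lemma primrec_accL : Primrec fun t : (Code × ℕ) × ℕ => accL t.1.1 t.1.2 t.2 := by
  have hstep : Primrec₂ fun (t : (Code × ℕ) × ℕ) (p : ℕ × List (List Bool)) =>
      ((cand t.1.1 t.1.2 p.1).elim p.2
        fun σ => bif okB σ p.2 t.1.2 then σ :: p.2 else p.2 : List (List Bool)) := by
    apply Primrec₂.mk
    have hcand' : Primrec fun x : ((Code × ℕ) × ℕ) × (ℕ × List (List Bool)) =>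
        cand x.1.1.1 x.1.1.2 x.2.1 :=
      primrec_cand.comp (Primrec.pair (Primrec.fst.comp Primrec.fst)
        (Primrec.fst.comp Primrec.snd))
    have hih : Primrec fun x : ((Code × ℕ) × ℕ) × (ℕ × List (List Bool)) => x.2.2 :=
      Primrec.snd.comp Primrec.snd
    have hm : Primrec fun x : ((Code × ℕ) × ℕ) × (ℕ × List (List Bool)) => x.1.1.2 :=
      Primrec.snd.comp (Primrec.fst.comp Primrec.fst)
    have hfinal := Primrec.option_casesOn (f := fun x => x.2.2)
      (g := fun (x : ((Code × ℕ) × ℕ) × (ℕ × List (List Bool))) (σ : List Bool) =>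
        bif okB σ x.2.2 x.1.1.2 then σ :: x.2.2 else x.2.2) hcand' hih ?_
    · refine hfinal.of_eq fun x => ?_
      cases cand x.1.1.1 x.1.1.2 x.2.1 <;> rfl
    apply Primrec₂.mk
    exact Primrec.cond
      (primrec_okB.comp (Primrec.pair Primrec.snd
        (Primrec.pair (hih.comp Primrec.fst) (hm.comp Primrec.fst))))
      (Primrec.list_cons.comp Primrec.snd (hih.comp Primrec.fst))
      (hih.comp Primrec.fst)
  have h2 := Primrec.nat_rec' (Primrec.snd :
      Primrec fun t : (Code × ℕ) × ℕ => t.2)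
    (Primrec.const ([] : List (List Bool))) hstep
  exact h2

set_option maxHeartbeats 2000000 in
lemma primrec_outU : Primrec fun t : (Code × ℕ) × ℕ => outU t.1.1 t.1.2 t.2 := by
  unfold outU
  refine Primrec.option_bind primrec_cand (Primrec₂.mk ?_)
  have haccL : Primrec fun x : ((Code × ℕ) × ℕ) × List Bool =>
      accL x.1.1.1 x.1.1.2 x.1.2 := primrec_accL.comp Primrec.fst
  have hm : Primrec fun x : ((Code × ℕ) × ℕ) × List Bool => x.1.1.2 :=
    Primrec.snd.comp (Primrec.fst.comp Primrec.fst)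
  exact Primrec.cond
    (primrec_okB.comp (Primrec.pair Primrec.snd (Primrec.pair haccL hm)))
    (Primrec.option_some.comp Primrec.snd)
    (Primrec.const none)

set_option maxHeartbeats 2000000 in
lemma primrec₂_univTest : Primrec₂ univTest := by
  apply Primrec₂.mk
  unfold univTest
  have he : Primrec fun p : ℕ × ℕ => (Nat.unpair p.2).1 :=
    Primrec.fst.comp (Primrec.unpair.comp Primrec.snd)
  have hcode : Primrec fun p : ℕ × ℕ => Denumerable.ofNat Code (Nat.unpair p.2).1 :=
    (Primrec.ofNat Code).comp he
  have hm : Primrec fun p : ℕ × ℕ => p.1 + (Nat.unpair p.2).1 + 1 :=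
    Primrec.nat_add.comp (Primrec.nat_add.comp Primrec.fst he) (Primrec.const 1)
  have hj : Primrec fun p : ℕ × ℕ => (Nat.unpair p.2).2 :=
    Primrec.snd.comp (Primrec.unpair.comp Primrec.snd)
  exact primrec_outU.comp (Primrec.pair (Primrec.pair hcode hm) hj)

set_option maxHeartbeats 2000000 in
lemma primrec_tryStrAux : Primrec fun t : (Code × ℕ) × ℕ =>
    tryStrAux t.1.1 t.1.2 t.2 := by
  have hstep : Primrec₂ fun (t : (Code × ℕ) × ℕ) (p : ℕ × Option (List Bool)) =>
      (p.2.bind fun l => (Code.evaln t.1.2 t.1.1 p.1).bind fun v =>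
        (Encodable.decode (α := Bool) v).map fun b => l ++ [b]) := by
    apply Primrec₂.mk
    have hih : Primrec fun x : ((Code × ℕ) × ℕ) × (ℕ × Option (List Bool)) => x.2.2 :=
      Primrec.snd.comp Primrec.snd
    refine Primrec.option_bind hih (Primrec₂.mk ?_)
    have hcs : Primrec fun y : (((Code × ℕ) × ℕ) × (ℕ × Option (List Bool))) × List Bool =>
        y.1.1.1 := Primrec.fst.comp (Primrec.fst.comp Primrec.fst)
    have h_ev : Primrec fun y : (((Code × ℕ) × ℕ) × (ℕ × Option (List Bool))) × List Bool =>
        Code.evaln y.1.1.1.2 y.1.1.1.1 y.1.2.1 :=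
      Code.primrec_evaln.comp (Primrec.pair
        (Primrec.pair (Primrec.snd.comp hcs) (Primrec.fst.comp hcs))
        (Primrec.fst.comp (Primrec.snd.comp Primrec.fst)))
    refine Primrec.option_bind h_ev (Primrec₂.mk ?_)
    refine Primrec.option_map
      ((Primrec.decode (α := Bool)).comp Primrec.snd) (Primrec₂.mk ?_)
    exact Primrec.list_append.comp
      (Primrec.snd.comp (Primrec.fst.comp Primrec.fst))
      (Primrec.list_cons.comp Primrec.snd (Primrec.const []))
  have h2 := Primrec.nat_rec' (Primrec.snd :
      Primrec fun t : (Code × ℕ) × ℕ => t.2)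
    (Primrec.const (some ([] : List Bool))) hstep
  exact h2

set_option maxHeartbeats 2000000 in
lemma primrec₂_compTest : Primrec₂ compTest := by
  apply Primrec₂.mk
  unfold compTest
  have he : Primrec fun p : ℕ × ℕ => (Nat.unpair p.2).1 :=
    Primrec.fst.comp (Primrec.unpair.comp Primrec.snd)
  have hcode : Primrec fun p : ℕ × ℕ => Denumerable.ofNat Code (Nat.unpair p.2).1 :=
    (Primrec.ofNat Code).comp he
  have hm : Primrec fun p : ℕ × ℕ => p.1 + (Nat.unpair p.2).1 + 1 :=
    Primrec.nat_add.comp (Primrec.nat_add.comp Primrec.fst he) (Primrec.const 1)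
  have hs : Primrec fun p : ℕ × ℕ => (Nat.unpair p.2).2 :=
    Primrec.snd.comp (Primrec.unpair.comp Primrec.snd)
  exact primrec_tryStrAux.comp (Primrec.pair (Primrec.pair hcode hs) hm)


/-- A Martin-Löf test: a uniformly computable sequence of effectively open sets
`U n = openOf (f n)` with `μ (U n) ≤ 2⁻ⁿ`. -/
def IsMLTest (μ : Measure (ℕ → Bool)) (f : ℕ → ℕ → Option (List Bool)) : Prop :=
  Computable₂ f ∧ ∀ n, μ (openOf (f n)) ≤ (2⁻¹ : ℝ≥0∞) ^ n

/-- A Schnorr test: a Martin-Löf test whose measures are uniformly computable. -/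
def IsSchnorrTest (μ : Measure (ℕ → Bool)) (f : ℕ → ℕ → Option (List Bool)) : Prop :=
  IsMLTest μ f ∧ ∃ h : ℕ → ℕ → ℚ, Computable₂ h ∧
    ∀ n k, |(h n k : ℝ) - (μ (openOf (f n))).toReal| ≤ (1/2 : ℝ) ^ k

def MLNull (μ : Measure (ℕ → Bool)) (E : Set (ℕ → Bool)) : Prop :=
  ∃ f, IsMLTest μ f ∧ E ⊆ ⋂ n, openOf (f n)

def SchnorrNull (μ : Measure (ℕ → Bool)) (E : Set (ℕ → Bool)) : Prop :=
  ∃ f, IsSchnorrTest μ f ∧ E ⊆ ⋂ n, openOf (f n)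

def MLRandom (μ : Measure (ℕ → Bool)) (x : ℕ → Bool) : Prop :=
  ∀ E, MLNull μ E → x ∉ E

def SchnorrRandom (μ : Measure (ℕ → Bool)) (x : ℕ → Bool) : Prop :=
  ∀ E, SchnorrNull μ E → x ∉ E

/-- There is a universal Martin-Löf test: one whose intersection contains every
Martin-Löf null set.  Consequently, the set of computable points of Cantor space
is a Martin-Löf null set. -/
theorem exists_universal_mlTest
    (μ : Measure (ℕ → Bool))
    (hμ : ∀ σ : List Bool, μ (cyl σ) = (2⁻¹ : ℝ≥0∞) ^ σ.length) :
    ∃ f : ℕ → ℕ → Option (List Bool), IsMLTest μ f ∧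
      (∀ E, MLNull μ E → E ⊆ ⋂ n, openOf (f n)) ∧
      MLNull μ {x | Computable x} := by
  refine ⟨univTest, ⟨primrec₂_univTest.to_comp, fun n => measure_univTest_le μ hμ n⟩, ?_, ?_⟩
  · rintro E ⟨g, ⟨hgc, hgb⟩, hE⟩
    intro x hx
    exact Set.mem_iInter.2 fun n => univTest_universal μ hμ hgc hgb (hE hx) n
  · refine ⟨compTest, ⟨primrec₂_compTest.to_comp, fun n => measure_compTest_le μ hμ n⟩, ?_⟩
    intro x hx
    exact Set.mem_iInter.2 fun n => computable_mem_compTest hx n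
end
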